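/- Suppose 𝒱 is a P-point ultrafilter on ω and 𝒰 is any ultrafilter on ω, and suppose φ : 𝒱 → 𝒰 is monotone and cofinal in 𝒰. Then there exist a set P of non-empty finite subsets of ω and a map f : P → ω such that: (1) P is an antichain under inclusion (s, t ∈ P and s ⊆ t imply s = t); (2) f is finite-to-one; (3) for every a ∈ 𝒱 and every b ∈ 𝒰 there exists s ∈ P with s ⊆ a and f(s) ∈ b. -/

import Mathlib

open Set

namespace LocalMapAux

variable (V : Ultrafilter ℕ) (φ : Set ℕ → Set ℕ)

/-- The window set determined by a finite set `s` and a set `c`. -/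
def win (s : Finset ℕ) (c : Set ℕ) : Set ℕ := ↑s ∪ (c ∩ Set.Ioi (s.sup id))

lemma win_mono {s : Finset ℕ} {c c' : Set ℕ} (h : c ⊆ c') : win s c ⊆ win s c' := by
  rintro x (hx | hx)
  · exact Or.inl hx
  · exact Or.inr ⟨h hx.1, hx.2⟩

/-- The trace of `φ` on the window, truncated at `K`. -/
noncomputable def val (s : Finset ℕ) (K : ℕ) (c : Set ℕ) : Set ℕ := φ (win s c) ∩ Set.Iic K

lemma val_finite (s : Finset ℕ) (K : ℕ) (c : Set ℕ) : (val φ s K c).Finite :=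
  (Set.finite_Iic K).subset inter_subset_right

lemma exists_min (s : Finset ℕ) (K : ℕ) :
    ∃ c, c ∈ V ∧ ∀ c' ∈ V, (val φ s K c).ncard ≤ (val φ s K c').ncard := by
  classical
  have hne : {n | ∃ c ∈ V, (val φ s K c).ncard = n}.Nonempty :=
    ⟨(val φ s K Set.univ).ncard, Set.univ, Filter.univ_mem, rfl⟩
  obtain ⟨c, hc, hcard⟩ := Nat.sInf_mem hne
  exact ⟨c, hc, fun c' hc' => hcard ▸ Nat.sInf_le ⟨c', hc', rfl⟩⟩

/-- A window witness realizing the minimal possible trace. -/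
noncomputable def cstar (s : Finset ℕ) (K : ℕ) : Set ℕ := (exists_min V φ s K).choose

lemma cstar_mem (s : Finset ℕ) (K : ℕ) : cstar V φ s K ∈ V :=
  (exists_min V φ s K).choose_spec.1

lemma cstar_min (s : Finset ℕ) (K : ℕ) :
    ∀ c ∈ V, (val φ s K (cstar V φ s K)).ncard ≤ (val φ s K c).ncard :=
  (exists_min V φ s K).choose_spec.2

/-- The stable (minimal) trace. -/
noncomputable def T (s : Finset ℕ) (K : ℕ) : Set ℕ := val φ s K (cstar V φ s K)

lemma T_subset_Iic (s : Finset ℕ) (K : ℕ) : T V φ s K ⊆ Set.Iic K := inter_subset_right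

variable {V φ}

lemma V_infinite (hV : (V : Filter ℕ) ≤ Filter.cofinite) {a : Set ℕ} (ha : a ∈ V) :
    a.Infinite := by
  intro hfin
  have h1 : aᶜ ∈ V := hV (by simpa [Filter.mem_cofinite] using hfin)
  have h2 : a ∩ aᶜ ∈ V := Filter.inter_mem ha h1
  simp only [Set.inter_compl_self] at h2
  exact Ultrafilter.empty_notMem h2

lemma Ioi_mem (hV : (V : Filter ℕ) ≤ Filter.cofinite) (n : ℕ) : Set.Ioi n ∈ V :=
  hV (Filter.mem_cofinite.2 (by rw [Set.compl_Ioi]; exact Set.finite_Iic n))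

lemma win_mem (hV : (V : Filter ℕ) ≤ Filter.cofinite) {s : Finset ℕ} {c : Set ℕ}
    (hc : c ∈ V) : win s c ∈ V :=
  Filter.mem_of_superset (Filter.inter_mem hc (Ioi_mem hV (s.sup id))) subset_union_right

lemma val_stab (hV : (V : Filter ℕ) ≤ Filter.cofinite)
    (hmono : ∀ a b, a ∈ V → b ∈ V → a ⊆ b → φ a ⊆ φ b)
    (s : Finset ℕ) (K : ℕ) {c : Set ℕ} (hc : c ∈ V)
    (h : ∀ w ∈ c, s.sup id < w → w ∈ cstar V φ s K) :
    val φ s K c = T V φ s K := by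
  have hsub1 : win s c ⊆ win s (cstar V φ s K) := by
    rintro x (hx | hx)
    · exact Or.inl hx
    · exact Or.inr ⟨h _ hx.1 hx.2, hx.2⟩
  have hup : val φ s K c ⊆ T V φ s K :=
    inter_subset_inter_left _
      (hmono _ _ (win_mem hV hc) (win_mem hV (cstar_mem V φ s K)) hsub1)
  have hc' : c ∩ cstar V φ s K ∈ V := Filter.inter_mem hc (cstar_mem V φ s K)
  have h1 : val φ s K (c ∩ cstar V φ s K) ⊆ T V φ s K :=
    inter_subset_inter_left _
      (hmono _ _ (win_mem hV hc') (win_mem hV (cstar_mem V φ s K))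
        (win_mono inter_subset_right))
  have h2 : val φ s K (c ∩ cstar V φ s K) = T V φ s K :=
    Set.eq_of_subset_of_ncard_le h1 (cstar_min V φ s K _ hc') (val_finite φ s K _)
  have h3 : T V φ s K ⊆ val φ s K c := by
    rw [← h2]
    exact inter_subset_inter_left _
      (hmono _ _ (win_mem hV hc') (win_mem hV hc) (win_mono inter_subset_left))
  exact subset_antisymm hup h3

lemma T_consistent (hV : (V : Filter ℕ) ≤ Filter.cofinite)
    (hmono : ∀ a b, a ∈ V → b ∈ V → a ⊆ b → φ a ⊆ φ b)
    (s : Finset ℕ) {K K' : ℕ} (h : K' ≤ K) :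
    T V φ s K' = T V φ s K ∩ Set.Iic K' := by
  set c : Set ℕ := cstar V φ s K ∩ cstar V φ s K' with hcdef
  have hcV : c ∈ V := Filter.inter_mem (cstar_mem V φ s K) (cstar_mem V φ s K')
  have e1 : val φ s K' c = T V φ s K' :=
    val_stab hV hmono s K' hcV (fun w hw _ => hw.2)
  have e2 : val φ s K c = T V φ s K :=
    val_stab hV hmono s K hcV (fun w hw _ => hw.1)
  rw [← e1, ← e2]
  show φ (win s c) ∩ Set.Iic K' = (φ (win s c) ∩ Set.Iic K) ∩ Set.Iic K'
  rw [inter_assoc, Set.Iic_inter_Iic, min_eq_right h]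

variable (V φ)

/-- the union of all stable traces -/
noncomputable def Tinf (s : Finset ℕ) : Set ℕ := ⋃ K, T V φ s K

variable {V φ}

lemma Tinf_inter (hV : (V : Filter ℕ) ≤ Filter.cofinite)
    (hmono : ∀ a b, a ∈ V → b ∈ V → a ⊆ b → φ a ⊆ φ b)
    (s : Finset ℕ) (K : ℕ) : Tinf V φ s ∩ Set.Iic K = T V φ s K := by
  ext z
  constructor
  · rintro ⟨hz1, hz2⟩
    obtain ⟨K', hK'⟩ := mem_iUnion.1 hz1
    have h1 : z ∈ T V φ s (max K K') := by
      have e := T_consistent hV hmono s (le_max_right K K')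
      rw [e] at hK'
      exact hK'.1
    have e := T_consistent hV hmono s (le_max_left K K')
    rw [e]
    exact ⟨h1, hz2⟩
  · intro hz
    exact ⟨mem_iUnion.2 ⟨K, hz⟩, T_subset_Iic V φ s K hz⟩

variable (V φ)

/-- index family for the fusion intersections -/
def Idx (n : ℕ) : Set (Finset ℕ × ℕ) :=
  {p | p.1.Nonempty ∧ p.1 ⊆ Finset.Iic n ∧ p.2 ≤ n}

lemma Idx_finite (n : ℕ) : (Idx n).Finite := by
  apply Set.Finite.subset
    (Set.Finite.prod (Finset.Iic n).powerset.finite_toSet (Set.finite_Iic n))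
  rintro ⟨u, K⟩ ⟨_, h2, h3⟩
  refine ⟨?_, h3⟩
  have : (↑u : Set ℕ) ⊆ ↑(Finset.Iic n) := Finset.coe_subset.2 h2
  simpa using Finset.mem_coe.2 (Finset.mem_powerset.2 h2)

/-- The decreasing fusion family. -/
noncomputable def D (n : ℕ) : Set ℕ := ⋂ p ∈ Idx n, cstar V φ p.1 p.2

lemma D_mem (n : ℕ) : D V φ n ∈ V :=
  (Filter.biInter_mem (Idx_finite n)).2 fun p _ => cstar_mem V φ p.1 p.2

variable {V φ}

lemma D_spec {n w : ℕ} (hw : w ∈ D V φ n) {u : Finset ℕ} {K : ℕ}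
    (hu : u.Nonempty) (hu2 : u ⊆ Finset.Iic n) (hK : K ≤ n) :
    w ∈ cstar V φ u K := by
  have := Set.mem_iInter₂.1 hw (u, K)
  exact this ⟨hu, hu2, hK⟩

/-- pseudo-intersection from the P-point property -/
lemma pseudo (hV : (V : Filter ℕ) ≤ Filter.cofinite)
    (hP : ∀ g : ℕ → ℕ, ∃ A ∈ V,
      (∀ n : ℕ, (A ∩ g ⁻¹' {n}).Finite) ∨ ∃ c, ∀ x ∈ A, g x = c)
    (Df : ℕ → Set ℕ) (hD : ∀ n, Df n ∈ V) :
    ∃ X ∈ V, ∀ n, (X \ Df n).Finite := by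
  classical
  set g : ℕ → ℕ := fun x => sInf {n | n = x ∨ x ∉ Df n} with hg
  have hgne : ∀ x : ℕ, {n | n = x ∨ x ∉ Df n}.Nonempty := fun x => ⟨x, Or.inl rfl⟩
  obtain ⟨A, hA, hcase⟩ := hP g
  rcases hcase with hfin | ⟨c, hc⟩
  · refine ⟨A, hA, fun n => ?_⟩
    have hsub : A \ Df n ⊆ Set.Iic n ∪ ⋃ m ∈ Finset.range (n+1), (A ∩ g ⁻¹' {m}) := by
      rintro x ⟨hxA, hxD⟩
      by_cases hxn : x ≤ n
      · exact Or.inl hxn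
      · refine Or.inr ?_
        have hgx : g x ≤ n := Nat.sInf_le (Or.inr hxD)
        exact Set.mem_biUnion (Finset.mem_range.2 (Nat.lt_succ_of_le hgx)) ⟨hxA, rfl⟩
    exact ((Set.finite_Iic n).union
      (Set.Finite.biUnion (Finset.range (n+1)).finite_toSet fun m _ => hfin m)).subset hsub
  · exfalso
    have h1 : A ∩ Df c ∈ V := Filter.inter_mem hA (hD c)
    obtain ⟨x, hx, hcx⟩ := (V_infinite hV h1).exists_gt c
    have hmem : c ∈ {n | n = x ∨ x ∉ Df n} := by
      have h2 : g x ∈ {n | n = x ∨ x ∉ Df n} := Nat.sInf_mem (hgne x)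
      rw [hc x hx.1] at h2
      exact h2
    rcases hmem with h | h
    · omega
    · exact h hx.2

/-- the fusion set: a set in V whose tails beyond a ladder rung `R k` lie in `D (R k)` -/
lemma fusion (hV : (V : Filter ℕ) ≤ Filter.cofinite)
    (hP : ∀ g : ℕ → ℕ, ∃ A ∈ V,
      (∀ n : ℕ, (A ∩ g ⁻¹' {n}).Finite) ∨ ∃ c, ∀ x ∈ A, g x = c) :
    ∃ (X : Set ℕ) (R : ℕ → ℕ), X ∈ V ∧ StrictMono R ∧
      ∀ k, ∀ w ∈ X, R k < w → w ∈ D V φ (R k) := by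
  classical
  obtain ⟨X₀, hX₀, hdust⟩ := pseudo hV hP (D V φ) (D_mem V φ)
  -- dust bounds
  have hδ : ∀ n, ∃ B, ∀ x ∈ X₀, B ≤ x → x ∈ D V φ n := by
    intro n
    obtain ⟨B, hB⟩ := (hdust n).bddAbove
    refine ⟨B + 1, fun x hx hBx => ?_⟩
    by_contra hxD
    have := hB (show x ∈ X₀ \ D V φ n from ⟨hx, hxD⟩)
    omega
  choose δ hδspec using hδ
  -- ladder
  obtain ⟨y, hy0, hyS⟩ : ∃ y : ℕ → ℕ, y 0 = 0 ∧ ∀ k, y (k+1) = max (y k + 1) (δ (y k)) := by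
    refine ⟨fun k => Nat.rec 0 (fun _ yk => max (yk + 1) (δ yk)) k, rfl, fun k => rfl⟩
  have hymono : StrictMono y := strictMono_nat_of_lt_succ (fun k => by rw [hyS]; omega)
  have hpurity : ∀ k x, x ∈ X₀ → y (k+1) ≤ x → x ∈ D V φ (y k) := by
    intro k x hx hle
    apply hδspec (y k) x hx
    rw [hyS] at hle
    omega
  -- interval index
  have hJmem : ∀ w : ℕ, ∃ j, (w < y (j+1)) ∧ (y j ≤ w) := by
    intro w
    have hne : {j | w < y (j+1)}.Nonempty := by
      refine ⟨w, ?_⟩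
      have h1 : w + 1 ≤ y (w + 1) := hymono.le_apply
      simpa using h1
    refine ⟨sInf {j | w < y (j+1)}, Nat.sInf_mem hne, ?_⟩
    rcases Nat.eq_zero_or_pos (sInf {j | w < y (j+1)}) with h0 | hpos
    · rw [h0, hy0]; omega
    · have hnot : (sInf {j | w < y (j+1)} - 1) ∉ {j | w < y (j+1)} :=
        Nat.notMem_of_lt_sInf (by omega)
      have h2 : ¬ (w < y ((sInf {j | w < y (j+1)} - 1) + 1)) := hnot
      have he : (sInf {j | w < y (j+1)} - 1) + 1 = sInf {j | w < y (j+1)} := by omega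
      rw [he] at h2
      omega
  choose J hJ1 hJ2 using hJmem
  -- parity split
  set Aev : Set ℕ := X₀ ∩ {w | Even (J w)} with hAev
  set Aod : Set ℕ := X₀ ∩ {w | ¬ Even (J w)} with hAod
  have hsplit : Aev ∈ V ∨ Aod ∈ V := by
    by_cases h : Aev ∈ V
    · exact Or.inl h
    · right
      have h1 : ({w | Even (J w)} : Set ℕ) ∉ V := fun hh => h (Filter.inter_mem hX₀ hh)
      have h2 : ({w | Even (J w)} : Set ℕ)ᶜ ∈ V := (Ultrafilter.compl_mem_iff_notMem).2 h1
      exact Filter.inter_mem hX₀ h2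
  rcases hsplit with hev | hod
  · -- even windows occupied; rungs are odd ladder points
    refine ⟨Aev, fun k => y (2*k+1), hev, ?_, ?_⟩
    · intro i j hij
      exact hymono (by omega)
    · intro k w hw hlt
      have hj : Even (J w) := hw.2
      have h1 : y (J w) ≤ w := hJ2 w
      have h2 : w < y (J w + 1) := hJ1 w
      have h3 : 2*k+1 < J w + 1 := by
        have := lt_trans hlt h2
        exact hymono.lt_iff_lt.1 this
      have h4 : 2*k + 2 ≤ J w := by
        rcases hj with ⟨m, hm⟩
        omega
      have h5 : y ((2*k+1) + 1) ≤ w := le_trans (hymono.monotone (by omega : 2*k+2 ≤ J w)) h1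
      exact hpurity (2*k+1) w hw.1 h5
  · -- odd windows occupied; rungs are even ladder points
    refine ⟨Aod, fun k => y (2*k+2), hod, ?_, ?_⟩
    · intro i j hij
      exact hymono (by omega)
    · intro k w hw hlt
      have hj : ¬ Even (J w) := hw.2
      have h1 : y (J w) ≤ w := hJ2 w
      have h2 : w < y (J w + 1) := hJ1 w
      have h3 : 2*k+2 < J w + 1 := by
        have := lt_trans hlt h2
        exact hymono.lt_iff_lt.1 this
      have h4 : 2*k + 3 ≤ J w := by
        rcases Nat.even_or_odd (J w) with he | ⟨m, hm⟩
        · exact absurd he hj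
        · omega
      have h5 : y ((2*k+2) + 1) ≤ w := le_trans (hymono.monotone (by omega : 2*k+3 ≤ J w)) h1
      exact hpurity (2*k+2) w hw.1 h5

end LocalMapAux

/-- Lemma on P-points: if `V` is a P-point, `U` any ultrafilter, and
`φ : V → U` is monotone and cofinal in `U`, then there are an inclusion
antichain `P` of non-empty finite subsets of `ω` and a finite-to-one map
`f : P → ω` such that for all `a ∈ V` and `b ∈ U` there is `s ∈ P`
with `s ⊆ a` and `f s ∈ b`. -/
theorem local_map_lemma (U V : Ultrafilter ℕ)
    (hU : (U : Filter ℕ) ≤ Filter.cofinite) (hV : (V : Filter ℕ) ≤ Filter.cofinite)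
    (hP : ∀ g : ℕ → ℕ, ∃ A ∈ V,
      (∀ n : ℕ, (A ∩ g ⁻¹' {n}).Finite) ∨ ∃ c, ∀ x ∈ A, g x = c)
    (φ : Set ℕ → Set ℕ) (hmem : ∀ a ∈ V, φ a ∈ U)
    (hmono : ∀ a b, a ∈ V → b ∈ V → a ⊆ b → φ a ⊆ φ b)
    (hcof : ∀ b ∈ U, ∃ a ∈ V, φ a ⊆ b) :
    ∃ (P : Set (Finset ℕ)) (f : Finset ℕ → ℕ),
      (∀ s ∈ P, s.Nonempty) ∧
      (∀ s ∈ P, ∀ t ∈ P, s ⊆ t → s = t) ∧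
      (∀ n : ℕ, {s | s ∈ P ∧ f s = n}.Finite) ∧
      (∀ a ∈ V, ∀ b ∈ U, ∃ s ∈ P, ↑s ⊆ a ∧ f s ∈ b) := by
  classical
  open LocalMapAux in
  obtain ⟨X, R, hX, hR, hSF⟩ := LocalMapAux.fusion (V := V) (φ := φ) hV hP
  -- `κ n` : least rung index at or above `n`
  have hκex : ∀ n : ℕ, ∃ i, (n ≤ R i) ∧ ∀ m, n ≤ R m → i ≤ m := by
    intro n
    have hne : {i | n ≤ R i}.Nonempty := ⟨n, hR.le_apply⟩
    exact ⟨sInf {i | n ≤ R i}, Nat.sInf_mem hne, fun m hm => Nat.sInf_le hm⟩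
  choose κ hκ1 hκ2 using hκex
  -- `ι s` : least rung index at or above `s.sup id`
  have hιex : ∀ s : Finset ℕ, ∃ i, (s.sup id ≤ R i) ∧ ∀ m, s.sup id ≤ R m → i ≤ m := by
    intro s
    have hne : {i | s.sup id ≤ R i}.Nonempty := ⟨s.sup id, hR.le_apply⟩
    exact ⟨sInf {i | s.sup id ≤ R i}, Nat.sInf_mem hne, fun m hm => Nat.sInf_le hm⟩
  choose ι hι1 hι2 using hιex
  set cut : Finset ℕ → ℕ := fun s => if ι s = 0 then 0 else R (ι s - 1) with hcutdef
  set P₀ : Set (Finset ℕ) :=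
    {s | s.Nonempty ∧ (LocalMapAux.Tinf V φ s ∩ Set.Ioi (cut s)).Nonempty} with hP₀def
  set f : Finset ℕ → ℕ := fun s => sInf (LocalMapAux.Tinf V φ s ∩ Set.Ioi (cut s)) with hfdef
  set P : Set (Finset ℕ) := {s | s ∈ P₀ ∧ ∀ t ∈ P₀, t ⊆ s → t = s} with hPdef
  have hfP₀ : ∀ s ∈ P₀, f s ∈ LocalMapAux.Tinf V φ s ∧ cut s < f s := by
    intro s hs
    have h1 := Nat.sInf_mem hs.2
    exact ⟨h1.1, h1.2⟩
  -- boundedness of members of P₀ in terms of their f-value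
  have hbound : ∀ s ∈ P₀, ∀ x ∈ s, x ≤ R (κ (f s)) := by
    intro s hs x hx
    have h1 : cut s < f s := (hfP₀ s hs).2
    have hxs : x ≤ s.sup id := Finset.le_sup (f := id) hx
    have h2 : ι s ≤ κ (f s) := by
      by_contra hlt
      push_neg at hlt
      have hι0 : ι s ≠ 0 := by omega
      have h3 : κ (f s) ≤ ι s - 1 := by omega
      have h4 : R (κ (f s)) ≤ R (ι s - 1) := hR.monotone h3
      have h5 : f s ≤ R (ι s - 1) := le_trans (hκ1 _) h4
      have h6 : cut s = R (ι s - 1) := by rw [hcutdef]; simp [hι0]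
      omega
    calc x ≤ s.sup id := hxs
      _ ≤ R (ι s) := hι1 s
      _ ≤ R (κ (f s)) := hR.monotone h2
  -- extraction of minimal members of P₀
  have hminaux : ∀ n, ∀ s : Finset ℕ, s.card ≤ n → s ∈ P₀ → ∃ t, t ∈ P ∧ t ⊆ s := by
    intro n
    induction n with
    | zero =>
      intro s hcard hs
      have h0 : s = ∅ := Finset.card_eq_zero.1 (le_antisymm hcard (Nat.zero_le _))
      rw [h0] at hs
      exact absurd hs.1 (by simp)
    | succ n ih =>
      intro s hcard hs
      by_cases hminimal : ∀ t ∈ P₀, t ⊆ s → t = s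
      · exact ⟨s, ⟨hs, hminimal⟩, subset_rfl⟩
      · push_neg at hminimal
        obtain ⟨t, htP₀, hts, htne⟩ := hminimal
        have hlt : t.card < s.card := Finset.card_lt_card (ssubset_of_subset_of_ne hts htne)
        obtain ⟨u, hu1, hu2⟩ := ih t (by omega) htP₀
        exact ⟨u, hu1, hu2.trans hts⟩
  have hmin : ∀ s ∈ P₀, ∃ t, t ∈ P ∧ t ⊆ s := fun s hs =>
    hminaux s.card s le_rfl hs
  -- the core stability statement
  have hcore : ∀ (s : Finset ℕ) (K : ℕ) (c : Set ℕ), c ∈ V → ↑s ⊆ c →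
      (∀ w ∈ c, w ≤ s.sup id → w ∈ s) →
      (∀ w ∈ c, s.sup id < w → w ∈ LocalMapAux.cstar V φ s K) →
      φ c ∩ Set.Iic K = LocalMapAux.T V φ s K := by
    intro s K c hc hsc hc2 htail
    have hwin : LocalMapAux.win s c = c := by
      apply subset_antisymm
      · rintro x (hx | hx)
        · exact hsc hx
        · exact hx.1
      · intro x hx
        by_cases hle : x ≤ s.sup id
        · exact Or.inl (hc2 x hx hle)
        · exact Or.inr ⟨hx, by simpa using Nat.lt_of_not_le hle⟩
    have := LocalMapAux.val_stab hV hmono s K hc htail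
    rw [LocalMapAux.val, hwin] at this
    exact this
  refine ⟨P, f, ?_, ?_, ?_, ?_⟩
  · exact fun s hs => hs.1.1
  · intro s hs t ht hsub
    exact ht.2 s hs.1 hsub
  · -- finite-to-one
    intro n
    apply Set.Finite.subset ((Finset.Iic (R (κ n))).powerset.finite_toSet)
    rintro s ⟨hsP, hfsn⟩
    have h1 : ∀ x ∈ s, x ≤ R (κ n) := by
      intro x hx
      have := hbound s hsP.1 x hx
      rwa [hfsn] at this
    exact Finset.mem_coe.2 (Finset.mem_powerset.2 (fun x hx => Finset.mem_Iic.2 (h1 x hx)))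
  · -- density
    intro a ha b hb
    obtain ⟨cb, hcb, hcbsub⟩ := hcof b hb
    set a' : Set ℕ := a ∩ cb ∩ X with ha'def
    have ha'V : a' ∈ V := Filter.inter_mem (Filter.inter_mem ha hcb) hX
    have ha'a : a' ⊆ a := fun x hx => hx.1.1
    have ha'cb : a' ⊆ cb := fun x hx => hx.1.2
    have ha'X : a' ⊆ X := fun x hx => hx.2
    obtain ⟨z₀, hz₀⟩ := (LocalMapAux.V_infinite hV ha'V).nonempty
    have hφ : φ a' ∈ U := hmem a' ha'V
    have hU2 : φ a' ∩ Set.Ioi (R (κ z₀ + 1)) ∈ U :=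
      Filter.inter_mem hφ
        (hU (Filter.mem_cofinite.2 (by rw [Set.compl_Ioi]; exact Set.finite_Iic _)))
    obtain ⟨x, hxφ, hxgt⟩ := Filter.nonempty_of_mem hU2
    have hxgt' : R (κ z₀ + 1) < x := hxgt
    -- locate x between rungs
    have hκx0 : κ x ≠ 0 := by
      intro h0
      have h1 : x ≤ R 0 := by have := hκ1 x; rwa [h0] at this
      have h2 : R 0 ≤ R (κ z₀ + 1) := hR.monotone (Nat.zero_le _)
      omega
    have hRk : R (κ x - 1) < x := by
      by_contra hle
      push_neg at hle
      have := hκ2 x _ hle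
      omega
    have hRk1 : x ≤ R (κ x - 1 + 1) := by
      have he : κ x - 1 + 1 = κ x := by omega
      rw [he]; exact hκ1 x
    set k : ℕ := κ x - 1 with hkdef
    -- the head of a' through x's window
    have hfin : (a' ∩ Set.Iic (R (k+1))).Finite :=
      (Set.finite_Iic (R (k+1))).subset inter_subset_right
    set s : Finset ℕ := hfin.toFinset with hsdef
    have hsmem : ∀ z, z ∈ s ↔ z ∈ a' ∧ z ≤ R (k+1) := by
      intro z
      rw [hsdef, Set.Finite.mem_toFinset]
      exact Iff.rfl
    have hz₀s : z₀ ∈ s := by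
      refine (hsmem z₀).2 ⟨hz₀, ?_⟩
      have h1 : κ z₀ + 1 < κ x := by
        by_contra hge
        push_neg at hge
        have h2 : x ≤ R (κ z₀ + 1) := le_trans (hκ1 x) (hR.monotone hge)
        omega
      exact le_trans (hκ1 z₀) (hR.monotone (by omega))
    have hsne : s.Nonempty := ⟨z₀, hz₀s⟩
    have hssup : s.sup id ≤ R (k+1) := Finset.sup_le (fun z hz => ((hsmem z).1 hz).2)
    have hscoe : ↑s ⊆ a' := fun z hz => ((hsmem z).1 hz).1
    have hsclosed : ∀ w ∈ a', w ≤ s.sup id → w ∈ s := by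
      intro w hw hwle
      exact (hsmem w).2 ⟨hw, le_trans hwle hssup⟩
    have htail : ∀ K', K' ≤ R (k+1) → ∀ w ∈ a', s.sup id < w →
        w ∈ LocalMapAux.cstar V φ s K' := by
      intro K' hK' w hw hsw
      have hwgt : R (k+1) < w := by
        by_contra hle
        push_neg at hle
        have h1 : w ∈ s := (hsmem w).2 ⟨hw, hle⟩
        have h2 : w ≤ s.sup id := Finset.le_sup (f := id) h1
        omega
      have hwD : w ∈ LocalMapAux.D V φ (R (k+1)) := hSF (k+1) w (ha'X hw) hwgt
      exact LocalMapAux.D_spec hwD hsne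
        (fun z hz => Finset.mem_Iic.2 (le_trans (Finset.le_sup (f := id) hz) hssup)) hK'
    have hstab : φ a' ∩ Set.Iic x = LocalMapAux.T V φ s x :=
      hcore s x a' ha'V hscoe hsclosed (htail x hRk1)
    have hxT : x ∈ LocalMapAux.T V φ s x := by
      rw [← hstab]; exact ⟨hxφ, le_refl x⟩
    have hcutx : cut s < x := by
      have hιs : ι s ≤ k + 1 := hι2 s _ hssup
      have hcutle : cut s ≤ R k := by
        rcases Nat.eq_zero_or_pos (ι s) with h0 | hpos
        · rw [hcutdef]; simp [h0]
        · have h1 : cut s = R (ι s - 1) := by rw [hcutdef]; simp [Nat.pos_iff_ne_zero.1 hpos]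
          rw [h1]
          exact hR.monotone (by omega)
      omega
    have hsP₀ : s ∈ P₀ := ⟨hsne, ⟨x, ⟨Set.mem_iUnion.2 ⟨x, hxT⟩, hcutx⟩⟩⟩
    obtain ⟨t, htP, hts⟩ := hmin s hsP₀
    have htP₀ : t ∈ P₀ := htP.1
    have htcoe : ↑t ⊆ a' := fun z hz => hscoe (hts hz)
    refine ⟨t, htP, fun z hz => ha'a (htcoe hz), ?_⟩
    -- f t ∈ b
    set v : ℕ := f t with hvdef
    have hvT : v ∈ LocalMapAux.Tinf V φ t := (hfP₀ t htP₀).1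
    have hvcut : cut t < v := (hfP₀ t htP₀).2
    set M : ℕ := max (ι t) (κ v) with hMdef
    set atil : Set ℕ := ↑t ∪ (a' ∩ Set.Ioi (R M)) with hatildef
    have hatilV : atil ∈ V :=
      Filter.mem_of_superset (Filter.inter_mem ha'V (LocalMapAux.Ioi_mem hV (R M)))
        subset_union_right
    have htsup : t.sup id ≤ R M := le_trans (hι1 t) (hR.monotone (le_max_left _ _))
    have hvM : v ≤ R M := le_trans (hκ1 v) (hR.monotone (le_max_right _ _))
    have hstab2 : φ atil ∩ Set.Iic v = LocalMapAux.T V φ t v := by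
      apply hcore t v atil hatilV subset_union_left
      · rintro w (hw | hw) hwle
        · exact hw
        · exfalso
          have h1 : R M < w := hw.2
          omega
      · rintro w (hw | hw) hsw
        · exfalso
          have h1 : w ≤ t.sup id := Finset.le_sup (f := id) hw
          omega
        · have hwD : w ∈ LocalMapAux.D V φ (R M) := hSF M w (ha'X hw.1) hw.2
          exact LocalMapAux.D_spec hwD htP₀.1
            (fun z hz => Finset.mem_Iic.2 (le_trans (Finset.le_sup (f := id) hz) htsup)) hvM
    have hvT2 : v ∈ LocalMapAux.T V φ t v := by
      rw [← LocalMapAux.Tinf_inter hV hmono t v]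
      exact ⟨hvT, le_refl v⟩
    have hvφ : v ∈ φ atil := by
      rw [← hstab2] at hvT2
      exact hvT2.1
    have hsubcb : atil ⊆ cb := by
      rintro w (hw | hw)
      · exact ha'cb (htcoe hw)
      · exact ha'cb hw.1
    exact hcbsub (hmono atil cb hatilV hcb hsubcb hvφ)
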